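/- The group G(Ẽ₈^{(1,1)}) defined by the elliptic Dynkin presentation of type Ẽ₈^{(1,1)} is isomorphic to the group G'(Ẽ₈^{(1,1)}) defined by the new presentation with infinitely many generators tᵢ (i ∈ ℤ). -/

import Mathlib

/-!
STATEMENT 8: The group G(Ẽ₈^{(1,1)}) defined by the elliptic Dynkin presentation is isomorphic
to the group G'(Ẽ₈^{(1,1)}) defined by the new presentation with infinitely many
generators tᵢ (i ∈ ℤ).
-/

namespace EllipticE8Aux
section
variable {G : Type*} [Group G]

lemma lemA (a b s τ : G) (hτ : b * a = τ)
    (ha : a*s*a = s*a*s) (hb : b*s*b = s*b*s)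
    (hE : τ*s*τ*s = s*τ*s*τ) :
    (b*a*b⁻¹)*s*(b*a*b⁻¹) = s*(b*a*b⁻¹)*s := by
  subst hτ
  have h1 : b⁻¹*s*b = s*b*s⁻¹ := by
    rw [show b⁻¹*s*b = b⁻¹*(s*b*s)*s⁻¹ by group, ← hb]; group
  have h2 : s⁻¹*a*s = a*s*a⁻¹ := by
    rw [show s⁻¹*a*s = s⁻¹*(a*s*a)*a⁻¹ by group, ha]; group
  have h3 : b*s⁻¹*b⁻¹ = s⁻¹*b⁻¹*s := by
    rw [show s⁻¹*b⁻¹*s = s⁻¹*(b⁻¹*s*b)*b⁻¹ by group, h1]; group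
  calc (b*a*b⁻¹)*s*(b*a*b⁻¹)
      = b*a*(b⁻¹*s*b)*(a*b⁻¹) := by group
    _ = b*a*(s*b*s⁻¹)*(a*b⁻¹) := by rw [h1]
    _ = b*a*s*b*(s⁻¹*a*s)*(s⁻¹*b⁻¹) := by group
    _ = b*a*s*b*(a*s*a⁻¹)*(s⁻¹*b⁻¹) := by rw [h2]
    _ = (b*a*s*(b*a)*s)*(a⁻¹*s⁻¹*b⁻¹) := by group
    _ = (s*(b*a)*s*(b*a))*(a⁻¹*s⁻¹*b⁻¹) := by rw [show b*a*s*(b*a)*s = s*(b*a)*s*(b*a) from hE]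
    _ = s*(b*a)*s*(b*s⁻¹*b⁻¹) := by group
    _ = s*(b*a)*s*(s⁻¹*b⁻¹*s) := by rw [h3]
    _ = s*(b*a*b⁻¹)*s := by group

lemma lemA' (a b s τ : G) (hτ : b * a = τ)
    (ha : a*s*a = s*a*s) (hb : b*s*b = s*b*s)
    (hE : τ*s*τ*s = s*τ*s*τ) :
    (a⁻¹*b*a)*s*(a⁻¹*b*a) = s*(a⁻¹*b*a)*s := by
  subst hτ
  have h1 : b⁻¹*s*b = s*b*s⁻¹ := by
    rw [show b⁻¹*s*b = b⁻¹*(s*b*s)*s⁻¹ by group, ← hb]; group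
  have h2 : s⁻¹*a*s = a*s*a⁻¹ := by
    rw [show s⁻¹*a*s = s⁻¹*(a*s*a)*a⁻¹ by group, ha]; group
  have h3 : b*s⁻¹*b⁻¹ = s⁻¹*b⁻¹*s := by
    rw [show s⁻¹*b⁻¹*s = s⁻¹*(b⁻¹*s*b)*b⁻¹ by group, h1]; group
  calc (a⁻¹*b*a)*s*(a⁻¹*b*a)
      = a⁻¹*b*(a*s*a⁻¹)*(b*a) := by group
    _ = a⁻¹*b*(s⁻¹*a*s)*(b*a) := by rw [← h2]
    _ = a⁻¹*(b*s⁻¹*b⁻¹)*(b*a*s*b*a) := by group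
    _ = a⁻¹*(s⁻¹*b⁻¹*s)*(b*a*s*b*a) := by rw [h3]
    _ = a⁻¹*s⁻¹*b⁻¹*(s*(b*a)*s*(b*a)) := by group
    _ = a⁻¹*s⁻¹*b⁻¹*(b*a*s*(b*a)*s) := by rw [← hE]
    _ = a⁻¹*(s⁻¹*a*s)*((b*a)*s) := by group
    _ = a⁻¹*(a*s*a⁻¹)*((b*a)*s) := by rw [h2]
    _ = s*(a⁻¹*b*a)*s := by group

lemma lemArev (a b s : G)
    (ha : a*s*a = s*a*s) (hb : b*s*b = s*b*s)
    (hbr : (b*a*b⁻¹)*s*(b*a*b⁻¹) = s*(b*a*b⁻¹)*s) :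
    b*a*s*(b*a)*s = s*(b*a)*s*(b*a) := by
  have h1 : b⁻¹*s*b = s*b*s⁻¹ := by
    rw [show b⁻¹*s*b = b⁻¹*(s*b*s)*s⁻¹ by group, ← hb]; group
  have h2 : s⁻¹*a*s = a*s*a⁻¹ := by
    rw [show s⁻¹*a*s = s⁻¹*(a*s*a)*a⁻¹ by group, ha]; group
  calc b*a*s*(b*a)*s
      = b*a*s*b*(a*s*a⁻¹)*(s⁻¹*b⁻¹)*(b*s*a) := by group
    _ = b*a*s*b*(s⁻¹*a*s)*(s⁻¹*b⁻¹)*(b*s*a) := by rw [← h2]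
    _ = b*a*(s*b*s⁻¹)*(a*b⁻¹)*(b*s*a) := by group
    _ = b*a*(b⁻¹*s*b)*(a*b⁻¹)*(b*s*a) := by rw [← h1]
    _ = ((b*a*b⁻¹)*s*(b*a*b⁻¹))*(b*s*a) := by group
    _ = (s*(b*a*b⁻¹)*s)*(b*s*a) := by rw [hbr]
    _ = s*(b*a)*(b⁻¹*s*b)*(s*a) := by group
    _ = s*(b*a)*(s*b*s⁻¹)*(s*a) := by rw [h1]
    _ = s*(b*a)*s*(b*a) := by group
end

section General
variable {G : Type*} [Group G]

lemma e1g (t0 t1 τ : G) (hτ : t1 * t0 = τ) : t0 * τ⁻¹ = t1⁻¹ := by rw [← hτ]; group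
lemma e2g (t0 t1 τ : G) (hτ : t1 * t0 = τ) : τ * t0⁻¹ = t1 := by rw [← hτ]; group
lemma e3g (t0 t1 τ : G) (hτ : t1 * t0 = τ) : τ⁻¹ * t1 = t0⁻¹ := by rw [← hτ]; group
lemma e4g (t0 t1 τ : G) (hτ : t1 * t0 = τ) : t1⁻¹ * τ = t0 := by rw [← hτ]; group

lemma TmulOddg (t0 t1 τ : G) (hτ : t1 * t0 = τ) (k : ℤ) :
    (τ^k*t1*τ^(-k)) * (τ^k*t0*τ^(-k)) = τ := by
  calc (τ^k*t1*τ^(-k)) * (τ^k*t0*τ^(-k)) = τ^k*(t1*t0)*τ^(-k) := by group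
    _ = τ^k*τ*τ^(-k) := by rw [hτ]
    _ = τ := by group

lemma TmulEveng (t0 t1 τ : G) (hτ : t1 * t0 = τ) (k : ℤ) :
    (τ^k*t0*τ^(-k)) * (τ^(k-1)*t1*τ^(-(k-1))) = τ := by
  calc (τ^k*t0*τ^(-k)) * (τ^(k-1)*t1*τ^(-(k-1)))
      = τ^k*(t0*τ⁻¹)*(t1*τ^(-(k-1))) := by group
    _ = τ^k*t1⁻¹*(t1*τ^(-(k-1))) := by rw [e1g t0 t1 τ hτ]
    _ = τ := by group

theorem braidABgen (t0 t1 s τ : G) (hτ : t1 * t0 = τ)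
    (h0 : t0*s*t0 = s*t0*s) (h1 : t1*s*t1 = s*t1*s)
    (hE : τ*s*τ*s = s*τ*s*τ) : ∀ k : ℤ,
    ((τ^k*t0*τ^(-k)) * s * (τ^k*t0*τ^(-k)) = s * (τ^k*t0*τ^(-k)) * s) ∧
    ((τ^k*t1*τ^(-k)) * s * (τ^k*t1*τ^(-k)) = s * (τ^k*t1*τ^(-k)) * s) := by
  have e1 := e1g t0 t1 τ hτ
  have e2 := e2g t0 t1 τ hτ
  have e3 := e3g t0 t1 τ hτ
  have e4 := e4g t0 t1 τ hτ
  intro k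
  induction k using Int.induction_on with
  | zero =>
    constructor
    · simpa using h0
    · simpa using h1
  | succ k ih =>
    have hAB : (τ^(k:ℤ)*t1*τ^(-(k:ℤ))) * (τ^(k:ℤ)*t0*τ^(-(k:ℤ))) = τ :=
      TmulOddg t0 t1 τ hτ k
    have hA1 := lemA _ _ s _ hAB ih.1 ih.2 hE
    have eqA : (τ^(k:ℤ)*t1*τ^(-(k:ℤ))) * (τ^(k:ℤ)*t0*τ^(-(k:ℤ))) * (τ^(k:ℤ)*t1*τ^(-(k:ℤ)))⁻¹
        = τ^((k:ℤ)+1)*t0*τ^(-((k:ℤ)+1)) := by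
      calc (τ^(k:ℤ)*t1*τ^(-(k:ℤ))) * (τ^(k:ℤ)*t0*τ^(-(k:ℤ))) * (τ^(k:ℤ)*t1*τ^(-(k:ℤ)))⁻¹
          = τ * (τ^(k:ℤ)*t1*τ^(-(k:ℤ)))⁻¹ := by rw [hAB]
        _ = τ^((k:ℤ)+1)*t1⁻¹*τ^(-(k:ℤ)) := by group
        _ = τ^((k:ℤ)+1)*(t0*τ⁻¹)*τ^(-(k:ℤ)) := by rw [← e1]
        _ = τ^((k:ℤ)+1)*t0*τ^(-((k:ℤ)+1)) := by group
    rw [eqA] at hA1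
    have hBA : (τ^((k:ℤ)+1)*t0*τ^(-((k:ℤ)+1))) * (τ^(k:ℤ)*t1*τ^(-(k:ℤ))) = τ := by
      calc (τ^((k:ℤ)+1)*t0*τ^(-((k:ℤ)+1))) * (τ^(k:ℤ)*t1*τ^(-(k:ℤ)))
          = τ^((k:ℤ)+1)*(t0*τ⁻¹)*(t1*τ^(-(k:ℤ))) := by group
        _ = τ^((k:ℤ)+1)*t1⁻¹*(t1*τ^(-(k:ℤ))) := by rw [e1]
        _ = τ := by group
    have hB1 := lemA _ _ s _ hBA ih.2 hA1 hE
    have eqB : (τ^((k:ℤ)+1)*t0*τ^(-((k:ℤ)+1))) * (τ^(k:ℤ)*t1*τ^(-(k:ℤ))) *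
        (τ^((k:ℤ)+1)*t0*τ^(-((k:ℤ)+1)))⁻¹ = τ^((k:ℤ)+1)*t1*τ^(-((k:ℤ)+1)) := by
      calc (τ^((k:ℤ)+1)*t0*τ^(-((k:ℤ)+1))) * (τ^(k:ℤ)*t1*τ^(-(k:ℤ))) *
          (τ^((k:ℤ)+1)*t0*τ^(-((k:ℤ)+1)))⁻¹
          = τ * (τ^((k:ℤ)+1)*t0*τ^(-((k:ℤ)+1)))⁻¹ := by rw [hBA]
        _ = τ^((k:ℤ)+1)*(τ*t0⁻¹)*τ^(-((k:ℤ)+1)) := by group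
        _ = τ^((k:ℤ)+1)*t1*τ^(-((k:ℤ)+1)) := by rw [e2]
    rw [eqB] at hB1
    exact ⟨hA1, hB1⟩
  | pred k ih =>
    have hAB : (τ^(-(k:ℤ))*t1*τ^(-(-(k:ℤ)))) * (τ^(-(k:ℤ))*t0*τ^(-(-(k:ℤ)))) = τ :=
      TmulOddg t0 t1 τ hτ (-(k:ℤ))
    have hB1 := lemA' _ _ s _ hAB ih.1 ih.2 hE
    have eqB : (τ^(-(k:ℤ))*t0*τ^(-(-(k:ℤ))))⁻¹ * (τ^(-(k:ℤ))*t1*τ^(-(-(k:ℤ)))) *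
        (τ^(-(k:ℤ))*t0*τ^(-(-(k:ℤ)))) = τ^(-(k:ℤ)-1)*t1*τ^(-(-(k:ℤ)-1)) := by
      calc (τ^(-(k:ℤ))*t0*τ^(-(-(k:ℤ))))⁻¹ * (τ^(-(k:ℤ))*t1*τ^(-(-(k:ℤ)))) *
          (τ^(-(k:ℤ))*t0*τ^(-(-(k:ℤ))))
          = τ^(-(k:ℤ))*t0⁻¹*((t1*t0)*τ^((k:ℤ))) := by group
        _ = τ^(-(k:ℤ))*t0⁻¹*(τ*τ^((k:ℤ))) := by rw [hτ]
        _ = τ^(-(k:ℤ))*(τ⁻¹*t1)*(τ*τ^((k:ℤ))) := by rw [← e3]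
        _ = τ^(-(k:ℤ)-1)*t1*τ^(-(-(k:ℤ)-1)) := by group
    rw [eqB] at hB1
    have hBA : (τ^(-(k:ℤ))*t0*τ^(-(-(k:ℤ)))) * (τ^(-(k:ℤ)-1)*t1*τ^(-(-(k:ℤ)-1))) = τ := by
      calc (τ^(-(k:ℤ))*t0*τ^(-(-(k:ℤ)))) * (τ^(-(k:ℤ)-1)*t1*τ^(-(-(k:ℤ)-1)))
          = τ^(-(k:ℤ))*(t0*τ⁻¹)*(t1*τ^((k:ℤ)+1)) := by group
        _ = τ^(-(k:ℤ))*t1⁻¹*(t1*τ^((k:ℤ)+1)) := by rw [e1]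
        _ = τ := by group
    have hA1 := lemA' _ _ s _ hBA hB1 ih.1 hE
    have eqA : (τ^(-(k:ℤ)-1)*t1*τ^(-(-(k:ℤ)-1)))⁻¹ * (τ^(-(k:ℤ))*t0*τ^(-(-(k:ℤ)))) *
        (τ^(-(k:ℤ)-1)*t1*τ^(-(-(k:ℤ)-1))) = τ^(-(k:ℤ)-1)*t0*τ^(-(-(k:ℤ)-1)) := by
      calc (τ^(-(k:ℤ)-1)*t1*τ^(-(-(k:ℤ)-1)))⁻¹ * (τ^(-(k:ℤ))*t0*τ^(-(-(k:ℤ)))) *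
          (τ^(-(k:ℤ)-1)*t1*τ^(-(-(k:ℤ)-1)))
          = τ^(-(k:ℤ)-1)*t1⁻¹*(τ*(t0*τ⁻¹)*(t1*τ^((k:ℤ)+1))) := by group
        _ = τ^(-(k:ℤ)-1)*t1⁻¹*(τ*t1⁻¹*(t1*τ^((k:ℤ)+1))) := by rw [e1]
        _ = τ^(-(k:ℤ)-1)*(t1⁻¹*τ)*τ^((k:ℤ)+1) := by group
        _ = τ^(-(k:ℤ)-1)*t0*τ^((k:ℤ)+1) := by rw [e4]
        _ = τ^(-(k:ℤ)-1)*t0*τ^(-(-(k:ℤ)-1)) := by group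
    rw [eqA] at hA1
    exact ⟨hA1, hB1⟩
end General
end EllipticE8Aux

namespace EllipticE8

/-- Generators of `G(Ẽ₈^{(1,1)})`: `Sum.inl i` is `tᵢ` (`i ∈ {0,1}`),
`Sum.inr j` is `s_(j+1)` (so `Sum.inr 0` is `s₁`, ..., `Sum.inr 7` is `s₈`). -/
abbrev GenG : Type := Fin 2 ⊕ Fin 8

/-- Generators of `G'(Ẽ₈^{(1,1)})`: `Sum.inl i` is `tᵢ` (`i ∈ ℤ`),
`Sum.inr j` is `s_(j+1)`. -/
abbrev GenG' : Type := ℤ ⊕ Fin 8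

/-- The braid relator `(aba)⁻¹(bab)` encoding the relation `aba = bab`. -/
def br {α : Type} (a b : FreeGroup α) : FreeGroup α := (a * b * a)⁻¹ * (b * a * b)

/-- The commutation relator `(ab)⁻¹(ba)` encoding the relation `ab = ba`. -/
def cm {α : Type} (a b : FreeGroup α) : FreeGroup α := (a * b)⁻¹ * (b * a)

/-- The pairs of (0-indexed) `s`-generators joined by an edge in the diagram,
i.e. satisfying a braid relation: (s₂,s₄), (s₃,s₅), (s₅,s₆), (s₆,s₇), (s₇,s₈). -/
def braidPairs : List (Fin 8 × Fin 8) := [(1, 3), (2, 4), (4, 5), (5, 6), (6, 7)]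

def tG (i : Fin 2) : FreeGroup GenG := FreeGroup.of (Sum.inl i)
def sG (j : Fin 8) : FreeGroup GenG := FreeGroup.of (Sum.inr j)

/-- Relators of the elliptic Dynkin presentation of `G(Ẽ₈^{(1,1)})`:
braid relations between `t₀, t₁` and `s₁, s₂, s₃`, braid relations along the edges
of the `s`-part of the diagram, the elliptic relations for `s₁, s₂, s₃`, and
commutation relations for all remaining pairs of distinct generators except `{t₀,t₁}`. -/
def relsG : Set (FreeGroup GenG) :=
  { r | (∃ i : Fin 2, ∃ j : Fin 8, j.val < 3 ∧ r = br (tG i) (sG j)) ∨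
        (∃ p ∈ braidPairs, r = br (sG p.1) (sG p.2)) ∨
        (∃ j : Fin 8, j.val < 3 ∧
          r = (sG j * tG 1 * tG 0 * sG j * tG 1 * tG 0)⁻¹ *
              (tG 1 * tG 0 * sG j * tG 1 * tG 0 * sG j)) ∨
        (∃ i j : Fin 8, i ≠ j ∧ (i, j) ∉ braidPairs ∧ (j, i) ∉ braidPairs ∧
          r = cm (sG i) (sG j)) ∨
        (∃ i : Fin 2, ∃ j : Fin 8, 3 ≤ j.val ∧ r = cm (tG i) (sG j)) }

def tG' (i : ℤ) : FreeGroup GenG' := FreeGroup.of (Sum.inl i)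
def sG' (j : Fin 8) : FreeGroup GenG' := FreeGroup.of (Sum.inr j)

/-- Relators of the new presentation of `G'(Ẽ₈^{(1,1)})`: braid relations between
every `tᵢ` (`i ∈ ℤ`) and `s₁, s₂, s₃`, the relations `tᵢtᵢ₋₁ = tⱼtⱼ₋₁`, braid relations
along the edges of the `s`-part of the diagram, commutation relations between the
remaining pairs of distinct `s`-generators, and commutation of every `tᵢ` with
`s₄, …, s₈`. -/
def relsG' : Set (FreeGroup GenG') :=
  { r | (∃ i : ℤ, ∃ j : Fin 8, j.val < 3 ∧ r = br (tG' i) (sG' j)) ∨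
        (∃ i j : ℤ, r = (tG' i * tG' (i - 1))⁻¹ * (tG' j * tG' (j - 1))) ∨
        (∃ p ∈ braidPairs, r = br (sG' p.1) (sG' p.2)) ∨
        (∃ i j : Fin 8, i ≠ j ∧ (i, j) ∉ braidPairs ∧ (j, i) ∉ braidPairs ∧
          r = cm (sG' i) (sG' j)) ∨
        (∃ i : ℤ, ∃ j : Fin 8, 3 ≤ j.val ∧ r = cm (tG' i) (sG' j)) }

open EllipticE8Aux

abbrev Gp := PresentedGroup relsG
abbrev Gp' := PresentedGroup relsG'

def td (i : Fin 2) : Gp := PresentedGroup.of (Sum.inl i)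
def sd (j : Fin 8) : Gp := PresentedGroup.of (Sum.inr j)
def td' (i : ℤ) : Gp' := PresentedGroup.of (Sum.inl i)
def sd' (j : Fin 8) : Gp' := PresentedGroup.of (Sum.inr j)

lemma relG_one {r : FreeGroup GenG} (h : r ∈ relsG) : PresentedGroup.mk relsG r = 1 :=
  (QuotientGroup.eq_one_iff r).mpr (Subgroup.subset_normalClosure h)

lemma relG'_one {r : FreeGroup GenG'} (h : r ∈ relsG') : PresentedGroup.mk relsG' r = 1 :=
  (QuotientGroup.eq_one_iff r).mpr (Subgroup.subset_normalClosure h)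

/-! ### relations in Gp -/

lemma braid_ts (i : Fin 2) (j : Fin 8) (hj : j.val < 3) :
    td i * sd j * td i = sd j * td i * sd j := by
  have h := relG_one (Or.inl ⟨i, j, hj, rfl⟩)
  simp only [br, tG, sG, map_mul, map_inv] at h
  rw [inv_mul_eq_one] at h
  exact h

lemma braid_ss (p : Fin 8 × Fin 8) (hp : p ∈ braidPairs) :
    sd p.1 * sd p.2 * sd p.1 = sd p.2 * sd p.1 * sd p.2 := by
  have h := relG_one (Or.inr (Or.inl ⟨p, hp, rfl⟩))
  simp only [br, sG, map_mul, map_inv] at h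
  rw [inv_mul_eq_one] at h
  exact h

lemma scomm (i j : Fin 8) (hij : i ≠ j) (h1 : (i, j) ∉ braidPairs) (h2 : (j, i) ∉ braidPairs) :
    sd i * sd j = sd j * sd i := by
  have h := relG_one (Or.inr (Or.inr (Or.inr (Or.inl ⟨i, j, hij, h1, h2, rfl⟩))))
  simp only [cm, sG, map_mul, map_inv] at h
  rw [inv_mul_eq_one] at h
  exact h

lemma tscomm (i : Fin 2) (j : Fin 8) (hj : 3 ≤ j.val) :
    td i * sd j = sd j * td i := by
  have h := relG_one (Or.inr (Or.inr (Or.inr (Or.inr ⟨i, j, hj, rfl⟩))))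
  simp only [cm, tG, sG, map_mul, map_inv] at h
  rw [inv_mul_eq_one] at h
  exact h

def tauG : Gp := td 1 * td 0

lemma ellG (j : Fin 8) (hj : j.val < 3) :
    tauG * sd j * tauG * sd j = sd j * tauG * sd j * tauG := by
  have h := relG_one (Or.inr (Or.inr (Or.inl ⟨j, hj, rfl⟩)))
  simp only [tG, sG, map_mul, map_inv] at h
  rw [inv_mul_eq_one] at h
  simp only [tauG, mul_assoc] at h ⊢
  exact h.symm

/-! ### relations in Gp' -/

lemma braid_ts' (i : ℤ) (j : Fin 8) (hj : j.val < 3) :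
    td' i * sd' j * td' i = sd' j * td' i * sd' j := by
  have h := relG'_one (Or.inl ⟨i, j, hj, rfl⟩)
  simp only [br, tG', sG', map_mul, map_inv] at h
  rw [inv_mul_eq_one] at h
  exact h

lemma braid_ss' (p : Fin 8 × Fin 8) (hp : p ∈ braidPairs) :
    sd' p.1 * sd' p.2 * sd' p.1 = sd' p.2 * sd' p.1 * sd' p.2 := by
  have h := relG'_one (Or.inr (Or.inr (Or.inl ⟨p, hp, rfl⟩)))
  simp only [br, sG', map_mul, map_inv] at h
  rw [inv_mul_eq_one] at h
  exact h

lemma scomm' (i j : Fin 8) (hij : i ≠ j) (h1 : (i, j) ∉ braidPairs) (h2 : (j, i) ∉ braidPairs) :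
    sd' i * sd' j = sd' j * sd' i := by
  have h := relG'_one (Or.inr (Or.inr (Or.inr (Or.inl ⟨i, j, hij, h1, h2, rfl⟩))))
  simp only [cm, sG', map_mul, map_inv] at h
  rw [inv_mul_eq_one] at h
  exact h

lemma tscomm' (i : ℤ) (j : Fin 8) (hj : 3 ≤ j.val) :
    td' i * sd' j = sd' j * td' i := by
  have h := relG'_one (Or.inr (Or.inr (Or.inr (Or.inr ⟨i, j, hj, rfl⟩))))
  simp only [cm, tG', sG', map_mul, map_inv] at h
  rw [inv_mul_eq_one] at h
  exact h

lemma prod_eq' (i j : ℤ) : td' i * td' (i - 1) = td' j * td' (j - 1) := by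
  have h := relG'_one (Or.inr (Or.inl ⟨i, j, rfl⟩))
  simp only [tG', map_mul, map_inv] at h
  rw [inv_mul_eq_one] at h
  exact h

def tau' : Gp' := td' 1 * td' 0

lemma prod_tau' (i : ℤ) : td' i * td' (i - 1) = tau' := by
  have h := prod_eq' i 1
  rw [show (1:ℤ) - 1 = 0 by norm_num] at h
  exact h

lemma step_up' (i : ℤ) : td' (i + 2) = tau' * td' i * tau'⁻¹ := by
  have h1 : td' (i + 2) * td' (i + 1) = tau' := by
    have h := prod_tau' (i + 2); rw [show i + 2 - 1 = i + 1 by ring] at h; exact h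
  have h2 : td' (i + 1) * td' i = tau' := by
    have h := prod_tau' (i + 1); rw [show i + 1 - 1 = i by ring] at h; exact h
  have h3 : td' (i + 1) = tau' * (td' i)⁻¹ := by rw [← h2]; group
  calc td' (i + 2) = (td' (i + 2) * td' (i + 1)) * (td' (i + 1))⁻¹ := by group
    _ = tau' * (td' (i + 1))⁻¹ := by rw [h1]
    _ = tau' * (tau' * (td' i)⁻¹)⁻¹ := by rw [h3]
    _ = tau' * td' i * tau'⁻¹ := by group

lemma step_down' (i : ℤ) : td' (i - 2) = tau'⁻¹ * td' i * tau' := by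
  have h := step_up' (i - 2)
  rw [show i - 2 + 2 = i by ring] at h
  rw [h]; group

lemma claim' (k : ℤ) :
    td' (2*k) = tau'^k * td' 0 * tau'^(-k) ∧ td' (2*k+1) = tau'^k * td' 1 * tau'^(-k) := by
  induction k using Int.induction_on with
  | zero => norm_num
  | succ k ih =>
    have e0 : td' (2*((k:ℤ)+1)) = tau' * td' (2*(k:ℤ)) * tau'⁻¹ := by
      rw [show 2*((k:ℤ)+1) = 2*(k:ℤ) + 2 by ring]; exact step_up' _
    have e1 : td' (2*((k:ℤ)+1)+1) = tau' * td' (2*(k:ℤ)+1) * tau'⁻¹ := by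
      rw [show 2*((k:ℤ)+1)+1 = (2*(k:ℤ)+1) + 2 by ring]; exact step_up' _
    refine ⟨?_, ?_⟩
    · rw [e0, ih.1]; group
    · rw [e1, ih.2]; group
  | pred k ih =>
    have e0 : td' (2*(-(k:ℤ)-1)) = tau'⁻¹ * td' (2*(-(k:ℤ))) * tau' := by
      rw [show 2*(-(k:ℤ)-1) = 2*(-(k:ℤ)) - 2 by ring]; exact step_down' _
    have e1 : td' (2*(-(k:ℤ)-1)+1) = tau'⁻¹ * td' (2*(-(k:ℤ))+1) * tau' := by
      rw [show 2*(-(k:ℤ)-1)+1 = (2*(-(k:ℤ))+1) - 2 by ring]; exact step_down' _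
    refine ⟨?_, ?_⟩
    · rw [e0, ih.1]; group
    · rw [e1, ih.2]; group

lemma td'_two : td' 2 = td' 1 * td' 0 * (td' 1)⁻¹ := by
  have h := step_up' 0
  rw [show (0:ℤ) + 2 = 2 by norm_num] at h
  rw [h]; simp only [tau']; group

lemma ell' (j : Fin 8) (hj : j.val < 3) :
    sd' j * td' 1 * td' 0 * sd' j * td' 1 * td' 0 =
      td' 1 * td' 0 * sd' j * td' 1 * td' 0 * sd' j := by
  have hbr := braid_ts' 2 j hj
  rw [td'_two] at hbr
  have h := lemArev (td' 0) (td' 1) (sd' j) (braid_ts' 0 j hj) (braid_ts' 1 j hj) hbr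
  simp only [mul_assoc] at h ⊢
  exact h.symm

/-! ### the elements T n in Gp and their relations -/

lemma braidAB (j : Fin 8) (hj : j.val < 3) (k : ℤ) :
    ((tauG^k * td 0 * tauG^(-k)) * sd j * (tauG^k * td 0 * tauG^(-k)) =
      sd j * (tauG^k * td 0 * tauG^(-k)) * sd j) ∧
    ((tauG^k * td 1 * tauG^(-k)) * sd j * (tauG^k * td 1 * tauG^(-k)) =
      sd j * (tauG^k * td 1 * tauG^(-k)) * sd j) :=
  braidABgen (td 0) (td 1) (sd j) tauG rfl (braid_ts 0 j hj) (braid_ts 1 j hj) (ellG j hj) k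

def TT (n : ℤ) : Gp := tauG^(n/2) * td (if n % 2 = 0 then 0 else 1) * tauG^(-(n/2))

lemma TT_even (k : ℤ) : TT (2*k) = tauG^k * td 0 * tauG^(-k) := by
  simp only [TT]
  rw [show (2*k)/2 = k by omega, show (2*k) % 2 = 0 by omega]
  simp

lemma TT_odd (k : ℤ) : TT (2*k+1) = tauG^k * td 1 * tauG^(-k) := by
  simp only [TT]
  rw [show (2*k+1)/2 = k by omega, show (2*k+1) % 2 = 1 by omega]
  simp

lemma braid_TT (n : ℤ) (j : Fin 8) (hj : j.val < 3) :
    TT n * sd j * TT n = sd j * TT n * sd j := by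
  rcases Int.even_or_odd n with ⟨k, hk⟩ | ⟨k, hk⟩
  · rw [show n = 2*k by omega, TT_even]; exact (braidAB j hj k).1
  · rw [show n = 2*k+1 by omega, TT_odd]; exact (braidAB j hj k).2

lemma TT_mul (n : ℤ) : TT n * TT (n-1) = tauG := by
  rcases Int.even_or_odd n with ⟨k, hk⟩ | ⟨k, hk⟩
  · rw [show n = 2*k by omega, TT_even, show 2*k-1 = 2*(k-1)+1 by ring, TT_odd]
    exact TmulEveng (td 0) (td 1) tauG rfl k
  · rw [show n = 2*k+1 by omega, show 2*k+1-1 = 2*k by ring, TT_odd, TT_even]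
    exact TmulOddg (td 0) (td 1) tauG rfl k

lemma comm_TT (n : ℤ) (j : Fin 8) (hj : 3 ≤ j.val) :
    TT n * sd j = sd j * TT n := by
  have ht : ∀ r : Fin 2, Commute (td r) (sd j) := fun r => tscomm r j hj
  have htau : Commute tauG (sd j) := by
    simp only [tauG]; exact (ht 1).mul_left (ht 0)
  have : Commute (TT n) (sd j) := by
    simp only [TT]
    exact ((htau.zpow_left _).mul_left (ht _)).mul_left (htau.zpow_left _) |>.symm.symm
  exact this

/-! ### the homomorphisms -/

def fG'G : GenG' → Gp
  | .inl n => TT n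
  | .inr j => sd j

lemma phi_ok : ∀ r ∈ relsG', FreeGroup.lift fG'G r = 1 := by
  rintro r (⟨i, j, hj, rfl⟩ | ⟨i, j, rfl⟩ | ⟨p, hp, rfl⟩ | ⟨i, j, hij, h1, h2, rfl⟩ |
    ⟨i, j, hj, rfl⟩)
  · simp only [br, tG', sG', map_mul, map_inv, FreeGroup.lift_apply_of, fG'G]
    rw [inv_mul_eq_one]; exact braid_TT i j hj
  · simp only [tG', map_mul, map_inv, FreeGroup.lift_apply_of, fG'G]
    rw [inv_mul_eq_one, TT_mul, TT_mul]
  · simp only [br, sG', map_mul, map_inv, FreeGroup.lift_apply_of, fG'G]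
    rw [inv_mul_eq_one]; exact braid_ss p hp
  · simp only [cm, sG', map_mul, map_inv, FreeGroup.lift_apply_of, fG'G]
    rw [inv_mul_eq_one]; exact scomm i j hij h1 h2
  · simp only [cm, tG', sG', map_mul, map_inv, FreeGroup.lift_apply_of, fG'G]
    rw [inv_mul_eq_one]; exact comm_TT i j hj

def fGG' : GenG → Gp'
  | .inl i => td' i.val
  | .inr j => sd' j

lemma psi_ok : ∀ r ∈ relsG, FreeGroup.lift fGG' r = 1 := by
  rintro r (⟨i, j, hj, rfl⟩ | ⟨p, hp, rfl⟩ | ⟨j, hj, rfl⟩ | ⟨i, j, hij, h1, h2, rfl⟩ |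
    ⟨i, j, hj, rfl⟩)
  · simp only [br, tG, sG, map_mul, map_inv, FreeGroup.lift_apply_of, fGG']
    rw [inv_mul_eq_one]; exact braid_ts' i.val j hj
  · simp only [br, sG, map_mul, map_inv, FreeGroup.lift_apply_of, fGG']
    rw [inv_mul_eq_one]; exact braid_ss' p hp
  · simp only [tG, sG, map_mul, map_inv, FreeGroup.lift_apply_of, fGG']
    rw [inv_mul_eq_one]
    rw [show (((1 : Fin 2).val : ℤ)) = 1 by norm_num, show (((0 : Fin 2).val : ℤ)) = 0 by norm_num]
    exact ell' j hj
  · simp only [cm, sG, map_mul, map_inv, FreeGroup.lift_apply_of, fGG']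
    rw [inv_mul_eq_one]; exact scomm' i j hij h1 h2
  · simp only [cm, tG, sG, map_mul, map_inv, FreeGroup.lift_apply_of, fGG']
    rw [inv_mul_eq_one]; exact tscomm' i.val j hj

def Phi : Gp' →* Gp := PresentedGroup.toGroup phi_ok
def Psi : Gp →* Gp' := PresentedGroup.toGroup psi_ok

lemma Phi_td' (n : ℤ) : Phi (td' n) = TT n := PresentedGroup.toGroup.of phi_ok
lemma Phi_sd' (j : Fin 8) : Phi (sd' j) = sd j := PresentedGroup.toGroup.of phi_ok
lemma Psi_td (i : Fin 2) : Psi (td i) = td' i.val := PresentedGroup.toGroup.of psi_ok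
lemma Psi_sd (j : Fin 8) : Psi (sd j) = sd' j := PresentedGroup.toGroup.of psi_ok

lemma Psi_tau : Psi tauG = tau' := by
  simp only [tauG, tau', map_mul, Psi_td]
  norm_num

lemma Psi_TT (n : ℤ) : Psi (TT n) = td' n := by
  rcases Int.even_or_odd n with ⟨k, hk⟩ | ⟨k, hk⟩
  · rw [show n = 2*k by omega, TT_even]
    simp only [map_mul, map_zpow, Psi_tau, Psi_td]
    rw [show (((0 : Fin 2).val : ℤ)) = 0 by norm_num]
    exact (claim' k).1.symm
  · rw [show n = 2*k+1 by omega, TT_odd]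
    simp only [map_mul, map_zpow, Psi_tau, Psi_td]
    rw [show (((1 : Fin 2).val : ℤ)) = 1 by norm_num]
    exact (claim' k).2.symm

lemma TT_zero : TT 0 = td 0 := by
  rw [show (0:ℤ) = 2*0 by norm_num, TT_even]; simp

lemma TT_one : TT 1 = td 1 := by
  rw [show (1:ℤ) = 2*0+1 by norm_num, TT_odd]; simp

theorem G_iso_G' : Nonempty (PresentedGroup relsG ≃* PresentedGroup relsG') := by
  have h1 : Phi.comp Psi = MonoidHom.id Gp := by
    apply PresentedGroup.ext
    rintro (i | j)
    · simp only [MonoidHom.comp_apply, MonoidHom.id_apply]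
      rw [show (PresentedGroup.of (Sum.inl i) : Gp) = td i from rfl, Psi_td, Phi_td']
      fin_cases i
      · simpa using TT_zero
      · simpa using TT_one
    · simp only [MonoidHom.comp_apply, MonoidHom.id_apply]
      rw [show (PresentedGroup.of (Sum.inr j) : Gp) = sd j from rfl, Psi_sd, Phi_sd']
  have h2 : Psi.comp Phi = MonoidHom.id Gp' := by
    apply PresentedGroup.ext
    rintro (n | j)
    · simp only [MonoidHom.comp_apply, MonoidHom.id_apply]
      rw [show (PresentedGroup.of (Sum.inl n) : Gp') = td' n from rfl, Phi_td', Psi_TT]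
    · simp only [MonoidHom.comp_apply, MonoidHom.id_apply]
      rw [show (PresentedGroup.of (Sum.inr j) : Gp') = sd' j from rfl, Phi_sd', Psi_sd]
  exact ⟨MonoidHom.toMulEquiv Psi Phi h1 h2⟩


end EllipticE8
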